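/- Let (Ω, F, (F_n), P) be a filtered probability space and (ξ_n(x))_{x∈E}, E ⊂ ℝ^d compact, random fields whose realizations a.s. admit a modulus θ, with M_n := sup_x |ξ_n(x)| + sup_{x≠y} |ξ_n(x)−ξ_n(y)|/θ(|x−y|). If (ξ_n(x), F_n) is a martingale for every fixed x and sup_n E[M_n] < ∞, then there exists a random field (ξ(x))_{x∈E} whose realizations a.s. admit θ, and ξ_n(x) → ξ(x) as n → ∞ pointwise in x, almost surely (on a single full-measure event). -/

import Mathlib

open MeasureTheory Filter Topology
open ENNReal

theorem aux_abs_condexp_le {Ω : Type*} {m m0 : MeasurableSpace Ω} {μ : Measure Ω}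
    [IsFiniteMeasure μ] {f : Ω → ℝ} (hf : Integrable f μ) :
    ∀ᵐ ω ∂μ, |(μ[f|m]) ω| ≤ (μ[(fun ω => |f ω|)|m]) ω := by
  filter_upwards [condExp_mono hf hf.abs
      (ae_of_all μ (fun x => le_abs_self (f x))),
    EventuallyLE.trans (condExp_neg f m).symm.le
      (condExp_mono hf.neg hf.abs (ae_of_all μ (fun x => neg_le_abs (f x))))] with x hx₁ hx₂
  exact abs_le.2 ⟨neg_le.mp (by simpa using hx₂), hx₁⟩

theorem martingale_field_modulus_limit
    {Ω : Type*} {mΩ : MeasurableSpace Ω} {μ : Measure Ω} [IsProbabilityMeasure μ]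
    (F : Filtration ℕ mΩ)
    {d : ℕ} (E : Set (EuclideanSpace ℝ (Fin d))) (hE : IsCompact E) (hEne : E.Nonempty)
    (θ : ℝ → ℝ) (hθc : Continuous θ) (hθm : MonotoneOn θ (Set.Ici 0))
    (hθ0 : θ 0 = 0)
    (hθsub : ∀ x y : ℝ, 0 ≤ x → 0 ≤ y → θ (x + y) ≤ θ x + θ y)
    (ξ : ℕ → E → Ω → ℝ)
    -- realizations of ξ n admit the modulus θ almost surely
    (hadm : ∀ n, ∀ᵐ ω ∂μ, ∃ C : ℝ, ∀ x y : E,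
      |ξ n x ω - ξ n y ω| ≤ C * θ (dist (x : EuclideanSpace ℝ (Fin d)) y))
    -- M n ω = sup_x |ξ n x ω| + sup_{x ≠ y} |ξ n x ω - ξ n y ω| / θ(|x - y|)
    (M : ℕ → Ω → ℝ)
    (hM : ∀ n ω, M n ω = (⨆ x : E, |ξ n x ω|) +
      ⨆ p : {p : E × E // p.1 ≠ p.2},
        |ξ n p.val.1 ω - ξ n p.val.2 ω| /
          θ (dist ((p.val.1 : E) : EuclideanSpace ℝ (Fin d)) (p.val.2 : E)))
    -- (ξ n x, F n) is a martingale for every fixed x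
    (hmart : ∀ x : E, Martingale (fun n => ξ n x) F μ)
    -- sup_n E[M n] < ∞
    (hint : ∀ n, Integrable (M n) μ)
    (hbdd : ∃ C : ℝ, ∀ n, ∫ ω, M n ω ∂μ ≤ C) :
    ∃ ξlim : E → Ω → ℝ,
      (∀ᵐ ω ∂μ, ∃ C : ℝ, ∀ x y : E,
        |ξlim x ω - ξlim y ω| ≤ C * θ (dist (x : EuclideanSpace ℝ (Fin d)) y)) ∧
      (∀ᵐ ω ∂μ, ∀ x : E, Tendsto (fun n => ξ n x ω) atTop (𝓝 (ξlim x ω))) := by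
  classical
  haveI : Nonempty E := hEne.to_subtype
  obtain ⟨Cb, hCb⟩ := hbdd
  -- θ is nonnegative on [0, ∞)
  have hθnn : ∀ t : ℝ, 0 ≤ t → 0 ≤ θ t := fun t ht => hθ0 ▸ hθm Set.self_mem_Ici ht ht
  -- a dense sequence in E
  set f : ℕ → E := TopologicalSpace.denseSeq E with hf
  have hfd : DenseRange f := TopologicalSpace.denseRange_denseSeq E
  -- the countable-pair modulus process
  set g : ℕ → ℕ × ℕ → Ω → ℝ := fun n k ω =>
    |ξ n (f k.1) ω - ξ n (f k.2) ω| /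
      θ (dist ((f k.1 : E) : EuclideanSpace ℝ (Fin d)) (f k.2 : E)) with hg
  set C : ℕ → Ω → ℝ := fun n ω => ⨆ k : ℕ × ℕ, g n k ω with hC
  have hgnn : ∀ n k ω, 0 ≤ g n k ω := fun n k ω =>
    div_nonneg (abs_nonneg _) (hθnn _ dist_nonneg)
  have hCnn : ∀ n ω, 0 ≤ C n ω := fun n ω => Real.iSup_nonneg (fun k => hgnn n k ω)
  -- the basic a.e. facts about C n
  have key : ∀ n, ∀ᵐ ω ∂μ,
      (∀ x y : E, |ξ n x ω - ξ n y ω| ≤ C n ω * θ (dist (x : EuclideanSpace ℝ (Fin d)) y))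
      ∧ C n ω ≤ M n ω ∧ (∀ x : E, |ξ n x ω| ≤ M n ω) := by
    intro n
    filter_upwards [hadm n] with ω hω
    obtain ⟨Cω, hCω⟩ := hω
    set C' : ℝ := max Cω 0 with hC'
    have hC'nn : 0 ≤ C' := le_max_right _ _
    have hCωle : Cω ≤ C' := le_max_left _ _
    -- bound on arbitrary ratios
    have hratio : ∀ x y : E,
        |ξ n x ω - ξ n y ω| / θ (dist (x : EuclideanSpace ℝ (Fin d)) y) ≤ C' := by
      intro x y
      set t := θ (dist (x : EuclideanSpace ℝ (Fin d)) y) with ht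
      have htnn : 0 ≤ t := hθnn _ dist_nonneg
      rcases eq_or_lt_of_le htnn with h0 | hpos
      · rw [← h0, _root_.div_zero]; exact hC'nn
      · rw [div_le_iff₀ hpos]
        exact (hCω x y).trans (mul_le_mul_of_nonneg_right hCωle hpos.le)
    have hbddg : BddAbove (Set.range fun k : ℕ × ℕ => g n k ω) := by
      refine ⟨C', ?_⟩; rintro _ ⟨k, rfl⟩; exact hratio _ _
    have hleC : ∀ k : ℕ × ℕ, g n k ω ≤ C n ω := fun k => le_ciSup hbddg k
    -- pair inequality on the dense sequence
    have hpair : ∀ i j : ℕ, |ξ n (f i) ω - ξ n (f j) ω| ≤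
        C n ω * θ (dist ((f i : E) : EuclideanSpace ℝ (Fin d)) (f j : E)) := by
      intro i j
      set t := θ (dist ((f i : E) : EuclideanSpace ℝ (Fin d)) (f j : E)) with ht
      have htnn : 0 ≤ t := hθnn _ dist_nonneg
      rcases eq_or_lt_of_le htnn with h0 | hpos
      · have h5 := hCω (f i) (f j)
        rw [← ht] at h5
        rw [← h0] at h5 ⊢
        rw [mul_zero] at h5 ⊢
        exact h5
      · have h5 : |ξ n (f i) ω - ξ n (f j) ω| / t ≤ C n ω := hleC (i, j)
        calc |ξ n (f i) ω - ξ n (f j) ω| = |ξ n (f i) ω - ξ n (f j) ω| / t * t := by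
              field_simp
          _ ≤ C n ω * t := mul_le_mul_of_nonneg_right h5 htnn
    -- continuity of the realization
    have hcont : Continuous fun x : E => ξ n x ω := by
      rw [continuous_iff_continuousAt]
      intro x
      rw [ContinuousAt, tendsto_iff_dist_tendsto_zero]
      have hbnd : Tendsto (fun y : E => Cω * θ (dist (y : EuclideanSpace ℝ (Fin d)) x))
          (𝓝 x) (𝓝 0) := by
        have hc : Continuous fun y : E =>
            Cω * θ (dist (y : EuclideanSpace ℝ (Fin d)) x) :=
          continuous_const.mul (hθc.comp (continuous_subtype_val.dist continuous_const))
        have := hc.tendsto x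
        simpa [dist_self, hθ0] using this
      refine squeeze_zero (fun y => dist_nonneg) (fun y => ?_) hbnd
      rw [Real.dist_eq]
      exact hCω y x
    -- part 1 : all pairs in E
    have hall : ∀ x y : E, |ξ n x ω - ξ n y ω| ≤
        C n ω * θ (dist (x : EuclideanSpace ℝ (Fin d)) y) := by
      have hclosed : IsClosed {p : E × E | |ξ n p.1 ω - ξ n p.2 ω| ≤
          C n ω * θ (dist ((p.1 : E) : EuclideanSpace ℝ (Fin d)) (p.2 : E))} := by
        apply isClosed_le
        · exact ((hcont.comp continuous_fst).sub (hcont.comp continuous_snd)).abs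
        · exact continuous_const.mul (hθc.comp
            ((continuous_subtype_val.comp continuous_fst).dist
              (continuous_subtype_val.comp continuous_snd)))
      have hdense : DenseRange (Prod.map f f) := hfd.prodMap hfd
      have hsub : Set.range (Prod.map f f) ⊆ {p : E × E | |ξ n p.1 ω - ξ n p.2 ω| ≤
          C n ω * θ (dist ((p.1 : E) : EuclideanSpace ℝ (Fin d)) (p.2 : E))} := by
        rintro _ ⟨⟨i, j⟩, rfl⟩
        exact hpair i j
      intro x y
      have : ((x, y) : E × E) ∈ closure (Set.range (Prod.map f f)) := hdense (x, y)
      exact closure_minimal hsub hclosed this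
    refine ⟨hall, ?_, ?_⟩
    · -- C n ω ≤ M n ω
      rw [hM]
      have hsup2nn : (0:ℝ) ≤ ⨆ p : {p : E × E // p.1 ≠ p.2},
          |ξ n p.val.1 ω - ξ n p.val.2 ω| /
            θ (dist ((p.val.1 : E) : EuclideanSpace ℝ (Fin d)) (p.val.2 : E)) :=
        Real.iSup_nonneg fun p => div_nonneg (abs_nonneg _) (hθnn _ dist_nonneg)
      have hbdd2 : BddAbove (Set.range fun p : {p : E × E // p.1 ≠ p.2} =>
          |ξ n p.val.1 ω - ξ n p.val.2 ω| /
            θ (dist ((p.val.1 : E) : EuclideanSpace ℝ (Fin d)) (p.val.2 : E))) := by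
        refine ⟨C', ?_⟩; rintro _ ⟨p, rfl⟩; exact hratio _ _
      have hsup1nn : (0:ℝ) ≤ ⨆ x : E, |ξ n x ω| := Real.iSup_nonneg fun x => abs_nonneg _
      have hCle : C n ω ≤ ⨆ p : {p : E × E // p.1 ≠ p.2},
          |ξ n p.val.1 ω - ξ n p.val.2 ω| /
            θ (dist ((p.val.1 : E) : EuclideanSpace ℝ (Fin d)) (p.val.2 : E)) := by
        refine ciSup_le fun k => ?_
        by_cases hk : f k.1 = f k.2
        · have : g n k ω = 0 := by
            rw [hg]; simp [hk]
          rw [this]; exact hsup2nn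
        · exact le_ciSup hbdd2 (⟨(f k.1, f k.2), hk⟩ : {p : E × E // p.1 ≠ p.2})
      linarith
    · -- |ξ n x ω| ≤ M n ω
      intro x
      rw [hM]
      obtain ⟨R, hRb⟩ := Metric.isBounded_iff.mp hE.isBounded
      have hbdd1 : BddAbove (Set.range fun x : E => |ξ n x ω|) := by
        refine ⟨|ξ n (f 0) ω| + C' * θ (max R 0), ?_⟩
        rintro _ ⟨y, rfl⟩
        have h1 : |ξ n y ω| ≤ |ξ n (f 0) ω| + |ξ n y ω - ξ n (f 0) ω| := by
          have := abs_sub_abs_le_abs_sub (ξ n y ω) (ξ n (f 0) ω)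
          linarith [abs_nonneg (ξ n y ω - ξ n (f 0) ω)]
        have h2 : |ξ n y ω - ξ n (f 0) ω| ≤ C' * θ (max R 0) := by
          have hd : dist ((y : E) : EuclideanSpace ℝ (Fin d)) (f 0 : E) ≤ max R 0 :=
            le_max_of_le_left (hRb y.2 (f 0).2)
          have hθle : θ (dist ((y : E) : EuclideanSpace ℝ (Fin d)) (f 0 : E)) ≤ θ (max R 0) :=
            hθm (Set.mem_Ici.mpr dist_nonneg) (Set.mem_Ici.mpr (le_max_right R 0)) hd
          calc |ξ n y ω - ξ n (f 0) ω|
              ≤ Cω * θ (dist ((y : E) : EuclideanSpace ℝ (Fin d)) (f 0 : E)) := hCω y (f 0)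
            _ ≤ C' * θ (dist ((y : E) : EuclideanSpace ℝ (Fin d)) (f 0 : E)) :=
                mul_le_mul_of_nonneg_right hCωle (hθnn _ dist_nonneg)
            _ ≤ C' * θ (max R 0) := mul_le_mul_of_nonneg_left hθle hC'nn
        linarith
      have h1 : |ξ n x ω| ≤ ⨆ x : E, |ξ n x ω| := le_ciSup hbdd1 x
      have hsup2nn : (0:ℝ) ≤ ⨆ p : {p : E × E // p.1 ≠ p.2},
          |ξ n p.val.1 ω - ξ n p.val.2 ω| /
            θ (dist ((p.val.1 : E) : EuclideanSpace ℝ (Fin d)) (p.val.2 : E)) :=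
        Real.iSup_nonneg fun p => div_nonneg (abs_nonneg _) (hθnn _ dist_nonneg)
      linarith
  -- C is a submartingale
  have hCadp : StronglyAdapted F C := by
    intro n
    letI : MeasurableSpace Ω := F n
    have hmeas : Measurable[F n] (C n) := by
      apply Measurable.iSup
      intro k
      exact ((((hmart (f k.1)).stronglyAdapted n).measurable.sub
        ((hmart (f k.2)).stronglyAdapted n).measurable).abs).div_const _
    exact hmeas.stronglyMeasurable
  have hCint : ∀ n, Integrable (C n) μ := by
    intro n
    have hmeas : AEStronglyMeasurable (C n) μ :=
      ((hCadp n).mono (F.le n)).aestronglyMeasurable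
    refine Integrable.mono (hint n) hmeas ?_
    filter_upwards [key n] with ω hω
    rw [Real.norm_eq_abs, Real.norm_eq_abs, abs_of_nonneg (hCnn n ω)]
    exact hω.2.1.trans (le_abs_self _)
  have hdiffint : ∀ m (k : ℕ × ℕ),
      Integrable (fun ω => ξ m (f k.1) ω - ξ m (f k.2) ω) μ :=
    fun m k => ((hmart (f k.1)).integrable m).sub ((hmart (f k.2)).integrable m)
  have hgint : ∀ m (k : ℕ × ℕ), Integrable (g m k) μ := by
    intro m k
    exact ((hdiffint m k).abs).div_const _
  have hgleC : ∀ m (k : ℕ × ℕ), g m k ≤ᵐ[μ] C m := by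
    intro m k
    filter_upwards [key m] with ω hω
    have h1 := hω.1 (f k.1) (f k.2)
    set t := θ (dist ((f k.1 : E) : EuclideanSpace ℝ (Fin d)) (f k.2 : E)) with ht
    have htnn : 0 ≤ t := hθnn _ dist_nonneg
    rcases eq_or_lt_of_le htnn with h0 | hpos
    · have : g m k ω = |ξ m (f k.1) ω - ξ m (f k.2) ω| / t := rfl
      rw [this, ← h0, _root_.div_zero]
      exact hCnn m ω
    · have : g m k ω = |ξ m (f k.1) ω - ξ m (f k.2) ω| / t := rfl
      rw [this, div_le_iff₀ hpos]
      exact h1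
  have hCsub : Submartingale C F μ := by
    refine submartingale_nat hCadp hCint (fun n => ?_)
    have hcondle : ∀ k : ℕ × ℕ, g n k ≤ᵐ[μ] μ[C (n + 1)|F n] := by
      intro k
      -- conditional expectation of the increment
      have hce : μ[(fun ω => ξ (n+1) (f k.1) ω - ξ (n+1) (f k.2) ω)|F n]
          =ᵐ[μ] fun ω => ξ n (f k.1) ω - ξ n (f k.2) ω := by
        refine (condExp_sub ((hmart (f k.1)).integrable (n+1))
          ((hmart (f k.2)).integrable (n+1)) (F n)).trans ?_
        have h1 := (hmart (f k.1)).condExp_ae_eq (Nat.le_succ n)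
        have h2 := (hmart (f k.2)).condExp_ae_eq (Nat.le_succ n)
        filter_upwards [h1, h2] with ω e1 e2
        simp only [Pi.sub_apply, e1, e2]
      have habs := aux_abs_condexp_le (m := F n) (μ := μ) (hdiffint (n+1) k)
      have hsmul := condExp_smul (m := F n) (μ := μ)
        ((θ (dist ((f k.1 : E) : EuclideanSpace ℝ (Fin d)) (f k.2 : E)))⁻¹)
        (fun ω => |ξ (n+1) (f k.1) ω - ξ (n+1) (f k.2) ω|)
      have hmono := condExp_mono (m := F n) (hgint (n+1) k) (hCint (n+1)) (hgleC (n+1) k)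
      filter_upwards [hce, habs, hsmul.symm.le, hsmul.le, hmono] with ω e1 e2 e3 e3' e4
      -- e1 : condexp of diff equals diff at n ; e2 : |condexp diff| ≤ condexp |diff|
      set t := θ (dist ((f k.1 : E) : EuclideanSpace ℝ (Fin d)) (f k.2 : E)) with ht
      have htnn : 0 ≤ t := hθnn _ dist_nonneg
      have hstep : g n k ω ≤ (μ[(fun ω => |ξ (n+1) (f k.1) ω - ξ (n+1) (f k.2) ω|)|F n]) ω / t := by
        have hgk : g n k ω = |ξ n (f k.1) ω - ξ n (f k.2) ω| / t := rfl
        rw [hgk]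
        rcases eq_or_lt_of_le htnn with h0 | hpos
        · rw [← h0, _root_.div_zero, _root_.div_zero]
        · apply div_le_div_of_nonneg_right ?_ hpos.le
          calc |ξ n (f k.1) ω - ξ n (f k.2) ω|
              = |(μ[(fun ω => ξ (n+1) (f k.1) ω - ξ (n+1) (f k.2) ω)|F n]) ω| := by rw [e1]
            _ ≤ (μ[(fun ω => |ξ (n+1) (f k.1) ω - ξ (n+1) (f k.2) ω|)|F n]) ω := e2
      have hsm : (μ[g (n+1) k|F n]) ω
          = (μ[(fun ω => |ξ (n+1) (f k.1) ω - ξ (n+1) (f k.2) ω|)|F n]) ω / t := by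
        have hgsm : g (n+1) k = (t⁻¹) •
            (fun ω => |ξ (n+1) (f k.1) ω - ξ (n+1) (f k.2) ω|) := by
          funext ω'
          show |ξ (n+1) (f k.1) ω' - ξ (n+1) (f k.2) ω'| / t = _
          simp only [Pi.smul_apply, smul_eq_mul]
          rw [div_eq_inv_mul]
        rw [hgsm]
        have e3'' : (μ[(t⁻¹) • (fun ω => |ξ (n+1) (f k.1) ω - ξ (n+1) (f k.2) ω|)|F n]) ω
            = ((t⁻¹) • μ[(fun ω => |ξ (n+1) (f k.1) ω - ξ (n+1) (f k.2) ω|)|F n]) ω :=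
          le_antisymm e3' e3
        rw [e3'']
        simp only [Pi.smul_apply, smul_eq_mul]
        rw [div_eq_inv_mul]
      rw [← hsm] at hstep
      exact hstep.trans e4
    have hall : ∀ᵐ ω ∂μ, ∀ k : ℕ × ℕ, g n k ω ≤ (μ[C (n + 1)|F n]) ω := by
      rw [ae_all_iff]; exact hcondle
    filter_upwards [hall] with ω hω
    exact ciSup_le hω
  -- L¹ bounds
  have hR : ∀ n, eLpNorm (C n) 1 μ ≤ (Cb.toNNReal : ℝ≥0∞) := by
    intro n
    show eLpNorm (C n) 1 μ ≤ ENNReal.ofReal Cb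
    rw [eLpNorm_one_eq_lintegral_enorm, ← ofReal_integral_norm_eq_lintegral_enorm (hCint n)]
    apply ENNReal.ofReal_le_ofReal
    calc ∫ ω, ‖C n ω‖ ∂μ = ∫ ω, C n ω ∂μ := by
          congr 1; funext ω; exact Real.norm_of_nonneg (hCnn n ω)
      _ ≤ ∫ ω, M n ω ∂μ := integral_mono_ae (hCint n) (hint n)
          ((key n).mono fun ω h => h.2.1)
      _ ≤ Cb := hCb n
  have hRx : ∀ i : ℕ, ∀ n, eLpNorm (ξ n (f i)) 1 μ ≤ (Cb.toNNReal : ℝ≥0∞) := by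
    intro i n
    show eLpNorm (ξ n (f i)) 1 μ ≤ ENNReal.ofReal Cb
    rw [eLpNorm_one_eq_lintegral_enorm,
      ← ofReal_integral_norm_eq_lintegral_enorm ((hmart (f i)).integrable n)]
    apply ENNReal.ofReal_le_ofReal
    calc ∫ ω, ‖ξ n (f i) ω‖ ∂μ = ∫ ω, |ξ n (f i) ω| ∂μ := by
          simp only [Real.norm_eq_abs]
      _ ≤ ∫ ω, M n ω ∂μ := integral_mono_ae ((hmart (f i)).integrable n).abs (hint n)
          ((key n).mono fun ω h => h.2.2 (f i))
      _ ≤ Cb := hCb n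
  -- convergence a.e.
  have hCconv : ∀ᵐ ω ∂μ, ∃ c, Tendsto (fun n => C n ω) atTop (𝓝 c) :=
    hCsub.exists_ae_tendsto_of_bdd hR
  have hXconv : ∀ᵐ ω ∂μ, ∀ i : ℕ, ∃ c, Tendsto (fun n => ξ n (f i) ω) atTop (𝓝 c) := by
    rw [ae_all_iff]
    exact fun i => ((hmart (f i)).submartingale).exists_ae_tendsto_of_bdd (hRx i)
  -- the good event
  have hG : ∀ᵐ ω ∂μ,
      (∀ n, ∀ x y : E, |ξ n x ω - ξ n y ω| ≤ C n ω * θ (dist (x : EuclideanSpace ℝ (Fin d)) y))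
      ∧ (∃ K : ℝ, ∀ n, C n ω ≤ K)
      ∧ (∀ i : ℕ, ∃ c, Tendsto (fun n => ξ n (f i) ω) atTop (𝓝 c)) := by
    have h1 : ∀ᵐ ω ∂μ, ∀ n, ∀ x y : E,
        |ξ n x ω - ξ n y ω| ≤ C n ω * θ (dist (x : EuclideanSpace ℝ (Fin d)) y) := by
      rw [ae_all_iff]; exact fun n => (key n).mono (fun ω h => h.1)
    filter_upwards [h1, hCconv, hXconv] with ω h1 h2 h3
    refine ⟨h1, ?_, h3⟩
    obtain ⟨c, hc⟩ := h2
    obtain ⟨K, hK⟩ := hc.bddAbove_range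
    exact ⟨K, fun n => hK ⟨n, rfl⟩⟩
  -- on the good event, ξ n x ω converges for every x
  have main : ∀ ω, ((∀ n, ∀ x y : E,
        |ξ n x ω - ξ n y ω| ≤ C n ω * θ (dist (x : EuclideanSpace ℝ (Fin d)) y))
      ∧ (∃ K : ℝ, ∀ n, C n ω ≤ K)
      ∧ (∀ i : ℕ, ∃ c, Tendsto (fun n => ξ n (f i) ω) atTop (𝓝 c))) →
      ∀ x : E, ∃ c, Tendsto (fun n => ξ n x ω) atTop (𝓝 c) := by
    rintro ω ⟨h1, ⟨K, hK⟩, h3⟩ x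
    have hKnn : 0 ≤ K := (hCnn 0 ω).trans (hK 0)
    have hmod : ∀ n (y z : E), |ξ n y ω - ξ n z ω| ≤
        K * θ (dist (y : EuclideanSpace ℝ (Fin d)) z) :=
      fun n y z => (h1 n y z).trans (mul_le_mul_of_nonneg_right (hK n) (hθnn _ dist_nonneg))
    have hcauchy : CauchySeq (fun n => ξ n x ω) := by
      rw [Metric.cauchySeq_iff]
      intro ε hε
      have hε3 : 0 < ε / 3 := by linarith
      have hθ0' : Tendsto θ (𝓝 0) (𝓝 0) := by
        simpa [hθ0] using hθc.tendsto 0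
      rw [Metric.tendsto_nhds_nhds] at hθ0'
      obtain ⟨δ, hδpos, hδ⟩ := hθ0' (ε := ε / 3 / (K + 1)) (by positivity)
      obtain ⟨i, hi⟩ := Metric.denseRange_iff.mp hfd x δ hδpos
      have hxi : K * θ (dist (x : EuclideanSpace ℝ (Fin d)) (f i : E)) < ε / 3 := by
        have hd : dist (dist (x : EuclideanSpace ℝ (Fin d)) (f i : E)) 0 < δ := by
          rw [Real.dist_eq, sub_zero, abs_of_nonneg dist_nonneg]
          rwa [Subtype.dist_eq] at hi
        have h5 := hδ hd
        rw [Real.dist_eq, sub_zero] at h5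
        have hθlt : θ (dist (x : EuclideanSpace ℝ (Fin d)) (f i : E)) < ε / 3 / (K + 1) :=
          (le_abs_self _).trans_lt h5
        have hθnn' : 0 ≤ θ (dist (x : EuclideanSpace ℝ (Fin d)) (f i : E)) :=
          hθnn _ dist_nonneg
        calc K * θ (dist (x : EuclideanSpace ℝ (Fin d)) (f i : E))
            ≤ (K + 1) * θ (dist (x : EuclideanSpace ℝ (Fin d)) (f i : E)) := by nlinarith
          _ < (K + 1) * (ε / 3 / (K + 1)) := by
              apply mul_lt_mul_of_pos_left hθlt (by linarith)
          _ = ε / 3 := by field_simp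
      obtain ⟨c, hc⟩ := h3 i
      have hci := hc.cauchySeq
      rw [Metric.cauchySeq_iff] at hci
      obtain ⟨N, hN⟩ := hci (ε / 3) hε3
      refine ⟨N, fun m hm n hn => ?_⟩
      have htri := dist_triangle4 (ξ m x ω) (ξ m (f i) ω) (ξ n (f i) ω) (ξ n x ω)
      have ha : dist (ξ m x ω) (ξ m (f i) ω) < ε / 3 := by
        rw [Real.dist_eq]
        exact (hmod m x (f i)).trans_lt hxi
      have hb : dist (ξ m (f i) ω) (ξ n (f i) ω) < ε / 3 := hN m hm n hn
      have hcd : dist (ξ n (f i) ω) (ξ n x ω) < ε / 3 := by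
        rw [Real.dist_eq]
        refine (hmod n (f i) x).trans_lt ?_
        rwa [dist_comm]
      calc dist (ξ m x ω) (ξ n x ω) ≤ _ := htri
        _ < ε / 3 + ε / 3 + ε / 3 := by linarith
        _ = ε := by ring
    exact cauchySeq_tendsto_of_complete hcauchy
  -- define the limit field
  set ξlim : E → Ω → ℝ := fun x ω =>
    if h : ∃ c, Tendsto (fun n => ξ n x ω) atTop (𝓝 c) then h.choose else 0 with hξlim
  have hlim : ∀ x ω, (∃ c, Tendsto (fun n => ξ n x ω) atTop (𝓝 c)) →
      Tendsto (fun n => ξ n x ω) atTop (𝓝 (ξlim x ω)) := by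
    intro x ω h
    rw [hξlim]; simp only [h, dif_pos]
    exact h.choose_spec
  refine ⟨ξlim, ?_, ?_⟩
  · filter_upwards [hG] with ω h
    obtain ⟨h1, ⟨K, hK⟩, h3⟩ := h
    refine ⟨K, fun x y => ?_⟩
    have hx := hlim x ω (main ω ⟨h1, ⟨K, hK⟩, h3⟩ x)
    have hy := hlim y ω (main ω ⟨h1, ⟨K, hK⟩, h3⟩ y)
    have habs : Tendsto (fun n => |ξ n x ω - ξ n y ω|) atTop
        (𝓝 (|ξlim x ω - ξlim y ω|)) := (hx.sub hy).abs
    refine le_of_tendsto habs (Eventually.of_forall (fun n => ?_))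
    exact (h1 n x y).trans (mul_le_mul_of_nonneg_right (hK n) (hθnn _ dist_nonneg))
  · filter_upwards [hG] with ω h x
    exact hlim x ω (main ω h x)
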